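/- Let V be a finite type with decidable equality, let n : ℕ, let D D' : Fin n → Finset V be the per-argument ranges of two factors f g : (Fin n → V) → ℝ≥0. If there exists a multiset h : Multiset V such that Multiset.map f ((Finset.univ.filter (fun r => (∀ i, r i ∈ D i) ∧ hist r = h)).val) ≠ Multiset.map g ((Finset.univ.filter (fun r => (∀ i, r i ∈ D' i) ∧ hist r = h)).val), or if there is no bijection τ : Equiv.Perm (Fin n) with D i = D' (τ i) for all i, then f and g do not represent equivalent potentials: there is no permutation π : Equiv.Perm (Fin n) satisfying both D' i = D (π i) for all i and f r = g (r ∘ π) for every assignment r with r i ∈ D i for all i. -/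
import Mathlib


open scoped NNReal

/-- The histogram of an assignment `r : Fin n → V` is the multiset of its values. -/
def hist {n : ℕ} {V : Type*} (r : Fin n → V) : Multiset V :=
  Multiset.map r Finset.univ.val

lemma hist_comp_perm {n : ℕ} {V : Type*} (σ : Equiv.Perm (Fin n)) (r : Fin n → V) :
    hist (r ∘ σ) = hist r := by
  unfold hist
  have huniv : Multiset.map σ Finset.univ.val = Finset.univ.val := by
    have h := Finset.map_univ_equiv σ
    calc Multiset.map σ Finset.univ.val = (Finset.univ.map σ.toEmbedding).val := by
          simp [Finset.map_val]
      _ = Finset.univ.val := by rw [h]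
  calc Multiset.map (r ∘ σ) Finset.univ.val
      = Multiset.map r (Multiset.map σ Finset.univ.val) := by rw [Multiset.map_map]
    _ = Multiset.map r Finset.univ.val := by rw [huniv]

/-- **Corollary 1.** If two factors violate the necessary conditions of Theorem 1 (either some
histogram has differing multisets of potentials, or no bijection matches the per-argument
ranges), then they cannot represent equivalent potentials. -/
theorem stmt_1 {V : Type*} [Fintype V] [DecidableEq V] (n : ℕ)
    (D D' : Fin n → Finset V) (f g : (Fin n → V) → ℝ≥0)
    (hviol :
      (∃ h : Multiset V,
        Multiset.map f
          ((Finset.univ.filter (fun r : Fin n → V => (∀ i, r i ∈ D i) ∧ hist r = h)).val) ≠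
        Multiset.map g
          ((Finset.univ.filter (fun r : Fin n → V => (∀ i, r i ∈ D' i) ∧ hist r = h)).val)) ∨
      ¬ ∃ τ : Equiv.Perm (Fin n), ∀ i, D i = D' (τ i)) :
    ¬ ∃ π : Equiv.Perm (Fin n), (∀ i, D' i = D (π i)) ∧
      ∀ r : Fin n → V, (∀ i, r i ∈ D i) → f r = g (r ∘ π) := by
  rintro ⟨π, hD, hf⟩
  rcases hviol with ⟨h, hne⟩ | hτ
  · apply hne
    set e : (Fin n → V) ≃ (Fin n → V) := Equiv.arrowCongr π.symm (Equiv.refl V) with he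
    have hev : ∀ r : Fin n → V, e r = r ∘ π := fun r => rfl
    set A := Finset.univ.filter (fun r : Fin n → V => (∀ i, r i ∈ D i) ∧ hist r = h) with hA
    set B := Finset.univ.filter (fun r : Fin n → V => (∀ i, r i ∈ D' i) ∧ hist r = h) with hB
    have hAB : B = A.map e.toEmbedding := by
      ext s
      simp only [hA, hB, Finset.mem_map, Finset.mem_filter, Finset.mem_univ, true_and,
        Equiv.coe_toEmbedding]
      constructor
      · rintro ⟨hs, hh⟩
        refine ⟨s ∘ π.symm, ⟨⟨fun i => ?_, ?_⟩, ?_⟩⟩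
        · have := hD (π.symm i)
          rw [Equiv.apply_symm_apply] at this
          rw [← this]
          exact hs (π.symm i)
        · rw [hist_comp_perm π.symm s]; exact hh
        · rw [hev]; ext i; simp
      · rintro ⟨r, ⟨hr, hh⟩, rfl⟩
        rw [hev]
        refine ⟨fun i => ?_, ?_⟩
        · rw [hD i]; exact hr (π i)
        · rw [hist_comp_perm π r]; exact hh
    rw [hAB, Finset.map_val, Multiset.map_map]
    apply Multiset.map_congr rfl
    intro r hr
    rw [hA] at hr
    simp only [Finset.mem_val, Finset.mem_filter, Finset.mem_univ, true_and] at hr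
    exact hf r hr.1
  · exact hτ ⟨π.symm, fun i => by rw [hD (π.symm i), Equiv.apply_symm_apply]⟩
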